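/- Let B₁, B₂ be symmetric positive-definite d×d real matrices with B₁ = (I - 2γA_x)ᵀ(I - 2A_v) and B₂ = I - 2A_v for matrices A_x, A_v. Define μ(x,v) ∝ exp(-xᵀB₁x/2 - vᵀB₂v/2) on ℝ^{2d}, and the drift b(x,v) = (β/2)·(-v, (I - 2γA_x)x + γB₂v) minus the diffusion correction, i.e., the vector field F(x,v) = (β/2)·((−v), (I − 2γA_x)x + γB₂v) + (β/2)·(0, γ·∇_v log μ). Then the pointwise inner product ⟨∇μ(x,v), ((β/2)(-v), (β/2)(I-2γA_x)x)⟩ = 0 for all (x,v), i.e., the Hamiltonian part of the drift is orthogonal to ∇μ. -/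

import Mathlib

open Matrix

lemma dot_mulVec_isBoundedBilinear {d : ℕ} (M : Matrix (Fin d) (Fin d) ℝ) :
    IsBoundedBilinearMap ℝ (fun p : (Fin d → ℝ) × (Fin d → ℝ) => p.1 ⬝ᵥ M.mulVec p.2) where
  add_left x₁ x₂ y := add_dotProduct x₁ x₂ _
  smul_left c x y := smul_dotProduct c x _
  add_right x y₁ y₂ := by rw [mulVec_add, dotProduct_add]
  smul_right c x y := by rw [mulVec_smul, dotProduct_smul]
  bound := by
    refine ⟨(∑ i, ∑ j, |M i j|) + 1, by positivity, fun x y => ?_⟩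
    have h : ‖x ⬝ᵥ M.mulVec y‖ ≤ (∑ i, ∑ j, |M i j|) * ‖x‖ * ‖y‖ := by
      rw [Real.norm_eq_abs, dotProduct, Finset.sum_mul, Finset.sum_mul]
      refine (Finset.abs_sum_le_sum_abs _ _).trans (Finset.sum_le_sum fun i _ => ?_)
      rw [mulVec, dotProduct, abs_mul]
      calc |x i| * |∑ j, M i j * y j| ≤ |x i| * ∑ j, |M i j| * |y j| := by
            refine mul_le_mul_of_nonneg_left ((Finset.abs_sum_le_sum_abs _ _).trans ?_) (abs_nonneg _)
            exact Finset.sum_le_sum fun j _ => (abs_mul _ _).le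
        _ ≤ ∑ j, |M i j| * ‖x‖ * ‖y‖ := by
            rw [Finset.mul_sum]
            refine Finset.sum_le_sum fun j _ => ?_
            have hx : |x i| ≤ ‖x‖ := norm_le_pi_norm x i
            have hy : |y j| ≤ ‖y‖ := norm_le_pi_norm y j
            calc |x i| * (|M i j| * |y j|) = |M i j| * |x i| * |y j| := by ring
              _ ≤ |M i j| * ‖x‖ * ‖y‖ := by
                  have h1 : |x i| * |y j| ≤ ‖x‖ * ‖y‖ :=
                    mul_le_mul hx hy (abs_nonneg _) (norm_nonneg _)
                  rw [mul_assoc, mul_assoc]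
                  exact mul_le_mul_of_nonneg_left h1 (abs_nonneg _)
        _ = (∑ j, |M i j|) * ‖x‖ * ‖y‖ := by rw [Finset.sum_mul, Finset.sum_mul]
    refine h.trans ?_
    have : (0:ℝ) ≤ ‖x‖ * ‖y‖ := by positivity
    nlinarith [norm_nonneg x, norm_nonneg y]

lemma quad_hasFDerivAt {d : ℕ} (M : Matrix (Fin d) (Fin d) ℝ)
    (bil : IsBoundedBilinearMap ℝ (fun p : (Fin d → ℝ) × (Fin d → ℝ) => p.1 ⬝ᵥ M.mulVec p.2))
    (x : Fin d → ℝ) :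
    HasFDerivAt (fun u : Fin d → ℝ => u ⬝ᵥ M.mulVec u)
      ((bil.deriv (x, x)).comp ((ContinuousLinearMap.id ℝ (Fin d → ℝ)).prod
        (ContinuousLinearMap.id ℝ (Fin d → ℝ)))) x := by
  have hd : HasFDerivAt (fun u : Fin d → ℝ => (u, u))
      ((ContinuousLinearMap.id ℝ (Fin d → ℝ)).prod (ContinuousLinearMap.id ℝ (Fin d → ℝ))) x :=
    (hasFDerivAt_id x).prodMk (hasFDerivAt_id x)
  have h := HasFDerivAt.comp (f := fun u : Fin d → ℝ => (u, u)) x (bil.hasFDerivAt (x, x)) hd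
  exact h

/-- The Hamiltonian part of the kinetic Langevin drift is orthogonal to `∇μ`,
where `μ(x,v) ∝ exp(-xᵀB₁x/2 - vᵀB₂v/2)`, `B₁ = (I-2γA_x)ᵀ(I-2A_v)`, `B₂ = I-2A_v`:
the directional derivative of `μ` along `((β/2)(-v), (β/2)(I-2γA_x)x)` vanishes. -/
theorem hamiltonian_orthogonal_grad {d : ℕ} (β γ : ℝ) (hβ : 0 < β) (hγ : 0 < γ)
    (Ax Av B₁ B₂ : Matrix (Fin d) (Fin d) ℝ)
    (hB₁ : B₁ = (1 - (2 * γ) • Ax)ᵀ * (1 - (2 : ℝ) • Av))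
    (hB₂ : B₂ = 1 - (2 : ℝ) • Av)
    (hB₁pd : B₁.PosDef) (hB₂pd : B₂.PosDef)
    (Z : ℝ) (hZ : 0 < Z)
    (μ : (Fin d → ℝ) × (Fin d → ℝ) → ℝ)
    (hμ : μ = fun p => Z * Real.exp (-(p.1 ⬝ᵥ B₁.mulVec p.1) / 2
        - (p.2 ⬝ᵥ B₂.mulVec p.2) / 2)) :
    ∀ x v : Fin d → ℝ,
      fderiv ℝ μ (x, v) ((β / 2) • (-v), (β / 2) • ((1 - (2 * γ) • Ax).mulVec x)) = 0 := by
  intro x v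
  have bil1 : IsBoundedBilinearMap ℝ (fun p : (Fin d → ℝ) × (Fin d → ℝ) => p.1 ⬝ᵥ B₁.mulVec p.2) := dot_mulVec_isBoundedBilinear _
  have bil2 : IsBoundedBilinearMap ℝ (fun p : (Fin d → ℝ) × (Fin d → ℝ) => p.1 ⬝ᵥ B₂.mulVec p.2) := dot_mulVec_isBoundedBilinear _
  have h1 := quad_hasFDerivAt B₁ bil1 x
  have h2 := quad_hasFDerivAt B₂ bil2 v
  have h1c := HasFDerivAt.comp (f := fun p : (Fin d → ℝ) × (Fin d → ℝ) => p.1) (x, v) h1 (hasFDerivAt_fst)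
  have h2c := HasFDerivAt.comp (f := fun p : (Fin d → ℝ) × (Fin d → ℝ) => p.2) (x, v) h2 (hasFDerivAt_snd)
  have h1c' : HasFDerivAt (fun p : (Fin d → ℝ) × (Fin d → ℝ) => p.1 ⬝ᵥ B₁.mulVec p.1)
      (((bil1.deriv (x, x)).comp ((ContinuousLinearMap.id ℝ (Fin d → ℝ)).prod
        (ContinuousLinearMap.id ℝ (Fin d → ℝ)))).comp
        (ContinuousLinearMap.fst ℝ (Fin d → ℝ) (Fin d → ℝ))) (x, v) := h1c
  have h2c' : HasFDerivAt (fun p : (Fin d → ℝ) × (Fin d → ℝ) => p.2 ⬝ᵥ B₂.mulVec p.2)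
      (((bil2.deriv (v, v)).comp ((ContinuousLinearMap.id ℝ (Fin d → ℝ)).prod
        (ContinuousLinearMap.id ℝ (Fin d → ℝ)))).comp
        (ContinuousLinearMap.snd ℝ (Fin d → ℝ) (Fin d → ℝ))) (x, v) := h2c
  have hg := (h1c'.const_mul (-(2⁻¹:ℝ))).sub (h2c'.const_mul (2⁻¹:ℝ))
  have hF := hg.exp.const_mul Z
  simp only [Pi.sub_apply] at hF
  have hkey : (fun p : (Fin d → ℝ) × (Fin d → ℝ) => Z * Real.exp (-(p.1 ⬝ᵥ B₁.mulVec p.1) / 2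
        - (p.2 ⬝ᵥ B₂.mulVec p.2) / 2)) = fun p : (Fin d → ℝ) × (Fin d → ℝ) =>
        Z * Real.exp (-(2⁻¹:ℝ) * (p.1 ⬝ᵥ B₁.mulVec p.1) - (2⁻¹:ℝ) * (p.2 ⬝ᵥ B₂.mulVec p.2)) := by
    funext p
    have h : -(p.1 ⬝ᵥ B₁.mulVec p.1) / 2 - (p.2 ⬝ᵥ B₂.mulVec p.2) / 2
        = -(2⁻¹:ℝ) * (p.1 ⬝ᵥ B₁.mulVec p.1) - (2⁻¹:ℝ) * (p.2 ⬝ᵥ B₂.mulVec p.2) := by ring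
    rw [h]
  rw [hμ, hkey, hF.fderiv]
  simp only [ContinuousLinearMap.smul_apply, ContinuousLinearMap.sub_apply,
    ContinuousLinearMap.comp_apply, ContinuousLinearMap.coe_fst', ContinuousLinearMap.coe_snd',
    ContinuousLinearMap.neg_apply, ContinuousLinearMap.prod_apply, ContinuousLinearMap.coe_id',
    IsBoundedBilinearMap.deriv_apply, id_eq, smul_eq_mul]
  have key : ∀ (M : Matrix (Fin d) (Fin d) ℝ), Mᵀ = M →
      ∀ u w : Fin d → ℝ, u ⬝ᵥ M.mulVec w = w ⬝ᵥ M.mulVec u := by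
    intro M hM u w
    rw [dotProduct_mulVec, ← mulVec_transpose, hM, dotProduct_comm]
  have hsym1 : B₁ᵀ = B₁ := by
    have h := hB₁pd.isHermitian
    rwa [Matrix.IsHermitian, conjTranspose_eq_transpose_of_trivial] at h
  have hsym2 : B₂ᵀ = B₂ := by
    have h := hB₂pd.isHermitian
    rwa [Matrix.IsHermitian, conjTranspose_eq_transpose_of_trivial] at h
  have cross : v ⬝ᵥ B₁.mulVec x = ((1 - (2 * γ) • Ax).mulVec x) ⬝ᵥ B₂.mulVec v := by
    rw [key B₁ hsym1 v x, hB₁, ← hB₂, ← mulVec_mulVec, dotProduct_mulVec, vecMul_transpose]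
  simp only [smul_dotProduct, dotProduct_smul, mulVec_smul, neg_dotProduct, dotProduct_neg,
    mulVec_neg, smul_eq_mul]
  rw [key B₁ hsym1 x v, key B₂ hsym2 v ((1 - (2 * γ) • Ax).mulVec x), cross]
  ring
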